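/- Let m satisfy |m(k,x) − I| ≤ C⟨k⟩^{-1}⟨x⟩^{-1-δ} with δ > n for a fixed integer n ≥ 0. Define for t ≠ 0 and k ∈ ℝ the operators (W_±(t)φ)(k) = √(t/(2πi)) ∫_0^∞ e^{it(k ± x/2)²} m(∓k, tx)† φ(x) dx and (V_±(t)φ)(k) the same with m† replaced by I. Then ‖(W_±(t) − V_±(t))(x^n φ)‖_{L²(ℝ)} ≤ C |t|^{-n} min{ |t|^{-1/2} ‖φ‖_{L^∞(ℝ₊)}, ‖φ‖_{L²(ℝ₊)} }. -/

import Mathlib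

open MeasureTheory Set

lemma aux_integrable_pow_div {p : ℕ} {q : ℝ} (hq : (p : ℝ) + 1 < q) :
    IntegrableOn (fun u : ℝ => u ^ p / Real.sqrt (1 + u ^ 2) ^ q) (Set.Ioi 0) := by
  have hq0 : 0 ≤ q := le_of_lt (lt_of_le_of_lt (by positivity) hq)
  have hpos : ∀ u : ℝ, 0 < Real.sqrt (1 + u ^ 2) := fun u =>
    Real.sqrt_pos.2 (by positivity)
  have hcont : Continuous fun u : ℝ => u ^ p / Real.sqrt (1 + u ^ 2) ^ q := by
    apply Continuous.div (continuous_pow p)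
    · exact ((Real.continuous_sqrt.comp (by continuity)).rpow_const
        (fun u => Or.inl (hpos u).ne'))
    · exact fun u => (Real.rpow_pos_of_pos (hpos u) q).ne'
  rw [← Set.Ioc_union_Ioi_eq_Ioi (zero_le_one : (0:ℝ) ≤ 1)]
  apply IntegrableOn.union
  · exact hcont.integrableOn_Ioc
  · apply Integrable.mono' (g := fun u : ℝ => u ^ ((p : ℝ) - q))
      (integrableOn_Ioi_rpow_of_lt (by linarith) one_pos)
      hcont.aestronglyMeasurable
    filter_upwards [ae_restrict_mem measurableSet_Ioi] with u hu
    have hu1 : (1:ℝ) < u := hu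
    have hu0 : (0:ℝ) < u := lt_trans one_pos hu1
    have h1 : u ^ q ≤ Real.sqrt (1 + u ^ 2) ^ q := by
      apply Real.rpow_le_rpow hu0.le _ hq0
      rw [show u = Real.sqrt (u ^ 2) by rw [Real.sqrt_sq hu0.le]]
      exact Real.sqrt_le_sqrt (by nlinarith [Real.sq_sqrt (sq_nonneg u)])
    rw [Real.norm_eq_abs, abs_of_nonneg (by positivity)]
    calc u ^ p / Real.sqrt (1 + u ^ 2) ^ q ≤ u ^ p / u ^ q := by
          apply div_le_div_of_nonneg_left (by positivity) (Real.rpow_pos_of_pos hu0 q) h1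
      _ = u ^ ((p : ℝ) - q) := by
          rw [Real.rpow_sub hu0, Real.rpow_natCast]

set_option maxHeartbeats 2000000 in
/-- If `|m(k,x) − I| ≤ C ⟨k⟩^{-1} ⟨x⟩^{-1-δ}` with `δ > n`, then with
`(W_±(t)φ)(k) = √(t/(2πi)) ∫_0^∞ e^{it(k ± x/2)²} m(∓k,tx)† φ(x) dx` and `V_±(t)` the same with
`m†` replaced by `I`,
`‖(W_±(t) − V_±(t))(xⁿφ)‖_{L²(ℝ)} ≤ C' |t|^{-n} min{|t|^{-1/2} ‖φ‖_{L^∞(ℝ₊)}, ‖φ‖_{L²(ℝ₊)}}`. -/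
theorem dressed_minus_free_weighted_bound {d : ℕ} (n : ℕ) (δ C : ℝ)
    (hδ : (n : ℝ) < δ) (hC : 0 < C)
    (m : ℝ → ℝ → (EuclideanSpace ℂ (Fin d) →L[ℂ] EuclideanSpace ℂ (Fin d)))
    (heven : ∀ k x : ℝ, m k (-x) = m k x)
    (hm : ∀ k x : ℝ,
      ‖m k x - ContinuousLinearMap.id ℂ (EuclideanSpace ℂ (Fin d))‖
        ≤ C / (Real.sqrt (1 + k ^ 2) * Real.sqrt (1 + x ^ 2) ^ (1 + δ))) :
    ∃ C' : ℝ, 0 < C' ∧ ∀ t : ℝ, t ≠ 0 → ∀ σ : ℝ, (σ = 1 ∨ σ = -1) →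
      ∀ (φ : ℝ → EuclideanSpace ℂ (Fin d)) (M : ℝ),
      (∀ x : ℝ, 0 < x → ‖φ x‖ ≤ M) →
      IntegrableOn (fun x : ℝ => ‖φ x‖ ^ 2) (Set.Ioi 0) →
      Real.sqrt (∫ k : ℝ,
          ‖(((t : ℂ)) / (2 * (Real.pi : ℂ) * Complex.I)) ^ ((1:ℂ)/2) •
              ∫ x in Set.Ioi (0:ℝ),
                Complex.exp (Complex.I * (t : ℂ) * ((k : ℂ) + (σ : ℂ) * (x : ℂ)/2) ^ 2) •
                  (x ^ n • ((ContinuousLinearMap.adjoint (m (-σ * k) (t * x))) (φ x) - φ x))‖ ^ 2)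
        ≤ C' * |t| ^ (-(n : ℝ)) *
            min (|t| ^ (-(1:ℝ)/2) * M) (Real.sqrt (∫ x in Set.Ioi (0:ℝ), ‖φ x‖ ^ 2)) := by
  have hδ0 : 0 < δ := lt_of_le_of_lt (Nat.cast_nonneg n) hδ
  set h1 : ℝ → ℝ := fun u => u ^ n / Real.sqrt (1 + u ^ 2) ^ (1 + δ) with hh1
  set h2 : ℝ → ℝ := fun u => u ^ (n * 2) / Real.sqrt (1 + u ^ 2) ^ ((1 + δ) * 2) with hh2
  have hint1 : IntegrableOn h1 (Set.Ioi 0) := aux_integrable_pow_div (by linarith)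
  have hint2 : IntegrableOn h2 (Set.Ioi 0) := aux_integrable_pow_div (by push_cast; linarith)
  set c1 := ∫ u in Set.Ioi (0:ℝ), h1 u with hc1def
  set c2 := ∫ u in Set.Ioi (0:ℝ), h2 u with hc2def
  have hc1 : 0 ≤ c1 := setIntegral_nonneg measurableSet_Ioi (fun u hu => by
    have : (0:ℝ) < u := hu; positivity)
  have hc2 : 0 ≤ c2 := setIntegral_nonneg measurableSet_Ioi (fun u hu => by
    have : (0:ℝ) < u := hu; positivity)
  refine ⟨Real.sqrt Real.pi * C * (c1 + Real.sqrt c2) + 1,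
    add_pos_of_nonneg_of_pos
      (mul_nonneg (mul_nonneg (Real.sqrt_nonneg _) hC.le)
        (add_nonneg hc1 (Real.sqrt_nonneg _))) one_pos, ?_⟩
  intro t ht σ hσ φ M hφM hφ2
  have ht' : 0 < |t| := abs_pos.2 ht
  have hM : 0 ≤ M := le_trans (norm_nonneg (φ 1)) (hφM 1 one_pos)
  have hσ2 : ∀ k : ℝ, (-σ * k) ^ 2 = k ^ 2 := by
    rcases hσ with h | h <;> subst h <;> intro k <;> ring
  set p : ℝ → ℝ := fun x => x ^ n / Real.sqrt (1 + (t * x) ^ 2) ^ (1 + δ) with hpdef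
  have hsqpos : ∀ y : ℝ, 0 < Real.sqrt (1 + y ^ 2) := fun y => Real.sqrt_pos.2 (by positivity)
  have habs2 : ∀ x : ℝ, (|t| * x) ^ 2 = (t * x) ^ 2 := fun x => by
    rw [mul_pow, mul_pow, sq_abs]
  have hscale : ∀ x : ℝ, h1 (|t| * x) = |t| ^ n * p x := by
    intro x
    simp only [hh1, hpdef]
    rw [mul_pow |t| x n, habs2 x]
    ring
  have hp2 : ∀ x : ℝ, p x ^ 2 = x ^ (n * 2) / Real.sqrt (1 + (t * x) ^ 2) ^ ((1 + δ) * 2) := by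
    intro x
    simp only [hpdef]
    rw [div_pow, ← pow_mul, ← Real.rpow_natCast (Real.sqrt (1 + (t * x) ^ 2) ^ (1 + δ)) 2,
      ← Real.rpow_mul (Real.sqrt_nonneg _)]
    norm_num
  have hscale2 : ∀ x : ℝ, h2 (|t| * x) = |t| ^ (n * 2) * p x ^ 2 := by
    intro x
    rw [hp2 x]
    simp only [hh2]
    rw [mul_pow |t| x (n * 2), habs2 x]
    ring
  have htn : (0:ℝ) < |t| ^ n := pow_pos ht' n
  have hcomp1 : IntegrableOn (fun x => h1 (|t| * x)) (Set.Ioi 0) := by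
    rw [integrableOn_Ioi_comp_mul_left_iff h1 0 ht', mul_zero]
    exact hint1
  have hcomp2 : IntegrableOn (fun x => h2 (|t| * x)) (Set.Ioi 0) := by
    rw [integrableOn_Ioi_comp_mul_left_iff h2 0 ht', mul_zero]
    exact hint2
  have hpint : IntegrableOn p (Set.Ioi 0) := by
    apply (hcomp1.const_mul ((|t| ^ n)⁻¹)).congr (ae_of_all _ fun x => ?_)
    show (|t| ^ n)⁻¹ * h1 (|t| * x) = p x
    rw [hscale x, inv_mul_cancel_left₀ htn.ne']
  have hp2int : IntegrableOn (fun x => p x ^ 2) (Set.Ioi 0) := by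
    apply (hcomp2.const_mul ((|t| ^ (n * 2))⁻¹)).congr (ae_of_all _ fun x => ?_)
    show (|t| ^ (n * 2))⁻¹ * h2 (|t| * x) = p x ^ 2
    rw [hscale2 x, inv_mul_cancel_left₀ (pow_pos ht' (n * 2)).ne']
  have hpval : ∫ x in Set.Ioi (0:ℝ), p x = (|t| ^ n)⁻¹ * (|t|⁻¹ * c1) := by
    have h := integral_comp_mul_left_Ioi h1 0 ht'
    rw [mul_zero] at h
    calc ∫ x in Set.Ioi (0:ℝ), p x
        = ∫ x in Set.Ioi (0:ℝ), (|t| ^ n)⁻¹ * h1 (|t| * x) := by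
          refine setIntegral_congr_fun measurableSet_Ioi fun x _ => ?_
          rw [hscale x, inv_mul_cancel_left₀ htn.ne']
      _ = (|t| ^ n)⁻¹ * ∫ x in Set.Ioi (0:ℝ), h1 (|t| * x) := integral_const_mul _ _
      _ = (|t| ^ n)⁻¹ * (|t|⁻¹ * c1) := by rw [h, smul_eq_mul]
  have hp2val : ∫ x in Set.Ioi (0:ℝ), p x ^ 2 = (|t| ^ (n * 2))⁻¹ * (|t|⁻¹ * c2) := by
    have h := integral_comp_mul_left_Ioi h2 0 ht'
    rw [mul_zero] at h
    calc ∫ x in Set.Ioi (0:ℝ), p x ^ 2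
        = ∫ x in Set.Ioi (0:ℝ), (|t| ^ (n * 2))⁻¹ * h2 (|t| * x) := by
          refine setIntegral_congr_fun measurableSet_Ioi fun x _ => ?_
          rw [hscale2 x, inv_mul_cancel_left₀ (pow_pos ht' (n * 2)).ne']
      _ = (|t| ^ (n * 2))⁻¹ * ∫ x in Set.Ioi (0:ℝ), h2 (|t| * x) := integral_const_mul _ _
      _ = (|t| ^ (n * 2))⁻¹ * (|t|⁻¹ * c2) := by rw [h, smul_eq_mul]
  have hsqcont : Continuous fun x : ℝ => Real.sqrt (1 + (t * x) ^ 2) :=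
    Real.continuous_sqrt.comp (continuous_const.add ((continuous_const.mul continuous_id).pow 2))
  have hpcont : Continuous p := by
    apply Continuous.div (continuous_pow n)
    · exact hsqcont.rpow_const (fun x => Or.inl (hsqpos (t * x)).ne')
    · exact fun x => (Real.rpow_pos_of_pos (hsqpos (t * x)) _).ne'
  have hφn : AEStronglyMeasurable (fun x => ‖φ x‖) (volume.restrict (Set.Ioi 0)) := by
    have h := hφ2.aestronglyMeasurable.aemeasurable
    have h2' := Real.continuous_sqrt.measurable.comp_aemeasurable h
    exact (h2'.congr (ae_of_all _ fun x => Real.sqrt_sq (norm_nonneg (φ x)))).aestronglyMeasurable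
  set g0 : ℝ → ℝ := fun x => p x * ‖φ x‖ with hg0def
  have hpnn : ∀ x : ℝ, 0 < x → 0 ≤ p x := fun x hx =>
    div_nonneg (pow_nonneg hx.le n) (Real.rpow_pos_of_pos (hsqpos (t * x)) _).le
  have hg0meas : AEStronglyMeasurable g0 (volume.restrict (Set.Ioi 0)) :=
    hpcont.aestronglyMeasurable.mul hφn
  have hg0int : IntegrableOn g0 (Set.Ioi 0) := by
    apply Integrable.mono' (hpint.mul_const M) hg0meas
    filter_upwards [ae_restrict_mem measurableSet_Ioi] with x hx
    have hx0 : (0:ℝ) < x := hx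
    rw [Real.norm_eq_abs, abs_of_nonneg (mul_nonneg (hpnn x hx0) (norm_nonneg _))]
    exact mul_le_mul_of_nonneg_left (hφM x hx0) (hpnn x hx0)
  set J := ∫ x in Set.Ioi (0:ℝ), g0 x with hJdef
  have hJ0 : 0 ≤ J := setIntegral_nonneg measurableSet_Ioi fun x hx =>
    mul_nonneg (hpnn x hx) (norm_nonneg _)
  have hJ1 : J ≤ M * ((|t| ^ n)⁻¹ * (|t|⁻¹ * c1)) := by
    calc J ≤ ∫ x in Set.Ioi (0:ℝ), M * p x := by
          refine setIntegral_mono_on hg0int (hpint.const_mul M) measurableSet_Ioi fun x hx => ?_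
          rw [hg0def, mul_comm M (p x)]
          exact mul_le_mul_of_nonneg_left (hφM x hx) (hpnn x hx)
      _ = M * ((|t| ^ n)⁻¹ * (|t|⁻¹ * c1)) := by rw [integral_const_mul, hpval]
  have hconj : Real.HolderConjugate 2 2 := Real.HolderConjugate.two_two
  have hofReal2 : ENNReal.ofReal (2:ℝ) = 2 := by
    rw [ENNReal.ofReal_ofNat]
  have hmemp : MemLp p (ENNReal.ofReal 2) (volume.restrict (Set.Ioi 0)) := by
    rw [hofReal2, memLp_two_iff_integrable_sq hpcont.aestronglyMeasurable]
    exact hp2int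
  have hmemφ : MemLp (fun x => ‖φ x‖) (ENNReal.ofReal 2) (volume.restrict (Set.Ioi 0)) := by
    rw [hofReal2, memLp_two_iff_integrable_sq hφn]
    exact hφ2
  have hJ2 : J ≤ Real.sqrt ((|t| ^ (n * 2))⁻¹ * (|t|⁻¹ * c2)) *
      Real.sqrt (∫ x in Set.Ioi (0:ℝ), ‖φ x‖ ^ 2) := by
    have h := integral_mul_le_Lp_mul_Lq_of_nonneg hconj
      (by filter_upwards [ae_restrict_mem measurableSet_Ioi] with x hx; exact hpnn x hx)
      (ae_of_all _ fun x => norm_nonneg (φ x)) hmemp hmemφ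
    simp only [Real.rpow_two] at h
    rw [Real.sqrt_eq_rpow, Real.sqrt_eq_rpow, ← hp2val]
    exact h
  have hkey : ∀ k : ℝ,
      ‖∫ x in Set.Ioi (0:ℝ),
          Complex.exp (Complex.I * (t : ℂ) * ((k : ℂ) + (σ : ℂ) * (x : ℂ)/2) ^ 2) •
            (x ^ n • ((ContinuousLinearMap.adjoint (m (-σ * k) (t * x))) (φ x) - φ x))‖
        ≤ C / Real.sqrt (1 + k ^ 2) * J := by
    intro k
    have hkpos : 0 < Real.sqrt (1 + k ^ 2) := hsqpos k
    refine le_trans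
      (norm_integral_le_of_norm_le (hg0int.const_mul (C / Real.sqrt (1 + k ^ 2))) ?_) ?_
    · filter_upwards [ae_restrict_mem measurableSet_Ioi] with x hx
      have hx0 : (0:ℝ) < x := hx
      show ‖_‖ ≤ C / Real.sqrt (1 + k ^ 2) * g0 x
      rw [norm_smul, norm_smul]
      have hexp : ‖Complex.exp (Complex.I * (t:ℂ) * ((k:ℂ) + (σ:ℂ) * (x:ℂ)/2) ^ 2)‖ = 1 := by
        have e : Complex.I * (t:ℂ) * ((k:ℂ) + (σ:ℂ) * (x:ℂ)/2) ^ 2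
            = ((t * (k + σ * x / 2) ^ 2 : ℝ) : ℂ) * Complex.I := by push_cast; ring
        rw [e, Complex.norm_exp_ofReal_mul_I]
      rw [hexp, one_mul]
      have hv : (ContinuousLinearMap.adjoint (m (-σ * k) (t * x))) (φ x) - φ x
          = (ContinuousLinearMap.adjoint (m (-σ * k) (t * x))
              - ContinuousLinearMap.id ℂ (EuclideanSpace ℂ (Fin d))) (φ x) := by
        simp
      have hop : ‖ContinuousLinearMap.adjoint (m (-σ * k) (t * x))
            - ContinuousLinearMap.id ℂ (EuclideanSpace ℂ (Fin d))‖
          = ‖m (-σ * k) (t * x) - ContinuousLinearMap.id ℂ (EuclideanSpace ℂ (Fin d))‖ := by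
        rw [show ContinuousLinearMap.adjoint (m (-σ * k) (t * x))
              - ContinuousLinearMap.id ℂ (EuclideanSpace ℂ (Fin d))
            = ContinuousLinearMap.adjoint (m (-σ * k) (t * x)
              - ContinuousLinearMap.id ℂ (EuclideanSpace ℂ (Fin d))) by
          rw [map_sub, ContinuousLinearMap.adjoint_id]]
        exact LinearIsometryEquiv.norm_map ContinuousLinearMap.adjoint _
      have hineq := hm (-σ * k) (t * x)
      rw [hσ2 k] at hineq
      have hBpos : 0 < Real.sqrt (1 + (t * x) ^ 2) ^ (1 + δ) :=
        Real.rpow_pos_of_pos (hsqpos (t * x)) _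
      have hxn : ‖x ^ n‖ = x ^ n := by
        rw [Real.norm_eq_abs, abs_of_pos (pow_pos hx0 n)]
      rw [hxn]
      calc x ^ n * ‖(ContinuousLinearMap.adjoint (m (-σ * k) (t * x))) (φ x) - φ x‖
          ≤ x ^ n * (C / (Real.sqrt (1 + k ^ 2) * Real.sqrt (1 + (t * x) ^ 2) ^ (1 + δ))
              * ‖φ x‖) := by
            apply mul_le_mul_of_nonneg_left _ (pow_nonneg hx0.le n)
            rw [hv]
            exact le_trans (ContinuousLinearMap.le_opNorm _ _)
              (mul_le_mul_of_nonneg_right (hop ▸ hineq) (norm_nonneg _))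
        _ = C / Real.sqrt (1 + k ^ 2) * g0 x := by
            simp only [hg0def, hpdef]
            field_simp
    · rw [integral_const_mul]
  set z : ℂ := ((t : ℂ)) / (2 * (Real.pi : ℂ) * Complex.I) with hzdef
  have hsc : ‖z ^ ((1:ℂ)/2)‖ ≤ Real.sqrt |t| := by
    have h := Complex.norm_cpow_le z ((1:ℂ)/2)
    have hre : ((1:ℂ)/2).re = 1/2 := by norm_num
    have him : ((1:ℂ)/2).im = 0 := by norm_num
    rw [hre, him, mul_zero, Real.exp_zero, div_one] at h
    have habs : ‖z‖ = |t| / (2 * Real.pi) := by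
      rw [hzdef]
      simp [Complex.norm_real, abs_of_pos Real.pi_pos]
    rw [habs] at h
    refine le_trans h ?_
    rw [Real.sqrt_eq_rpow]
    apply Real.rpow_le_rpow (by positivity) _ (by norm_num)
    apply div_le_self (abs_nonneg t)
    nlinarith [Real.pi_gt_three]
  have houter : (∫ k : ℝ,
      ‖z ^ ((1:ℂ)/2) •
          ∫ x in Set.Ioi (0:ℝ),
            Complex.exp (Complex.I * (t : ℂ) * ((k : ℂ) + (σ : ℂ) * (x : ℂ)/2) ^ 2) •
              (x ^ n • ((ContinuousLinearMap.adjoint (m (-σ * k) (t * x))) (φ x) - φ x))‖ ^ 2)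
      ≤ |t| * (C * J) ^ 2 * Real.pi := by
    have hptw : ∀ k : ℝ,
        ‖z ^ ((1:ℂ)/2) •
            ∫ x in Set.Ioi (0:ℝ),
              Complex.exp (Complex.I * (t : ℂ) * ((k : ℂ) + (σ : ℂ) * (x : ℂ)/2) ^ 2) •
                (x ^ n • ((ContinuousLinearMap.adjoint (m (-σ * k) (t * x))) (φ x) - φ x))‖ ^ 2
          ≤ |t| * (C * J) ^ 2 * (1 + k ^ 2)⁻¹ := by
      intro k
      rw [norm_smul]
      have h1 : ‖z ^ ((1:ℂ)/2)‖ * ‖∫ x in Set.Ioi (0:ℝ),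
            Complex.exp (Complex.I * (t : ℂ) * ((k : ℂ) + (σ : ℂ) * (x : ℂ)/2) ^ 2) •
              (x ^ n • ((ContinuousLinearMap.adjoint (m (-σ * k) (t * x))) (φ x) - φ x))‖
          ≤ Real.sqrt |t| * (C / Real.sqrt (1 + k ^ 2) * J) :=
        mul_le_mul hsc (hkey k) (norm_nonneg _) (Real.sqrt_nonneg _)
      calc _ ≤ (Real.sqrt |t| * (C / Real.sqrt (1 + k ^ 2) * J)) ^ 2 :=
            pow_le_pow_left₀ (by positivity) h1 2
        _ = |t| * (C * J) ^ 2 * (1 + k ^ 2)⁻¹ := by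
            rw [mul_pow, Real.sq_sqrt (abs_nonneg t), mul_pow, div_pow,
              Real.sq_sqrt (by positivity : (0:ℝ) ≤ 1 + k ^ 2), div_eq_mul_inv]
            ring
    calc _ ≤ ∫ k : ℝ, |t| * (C * J) ^ 2 * (1 + k ^ 2)⁻¹ :=
          integral_mono_of_nonneg (ae_of_all _ fun k => sq_nonneg _)
            (integrable_inv_one_add_sq.const_mul _) (ae_of_all _ hptw)
      _ = |t| * (C * J) ^ 2 * Real.pi := by
          rw [integral_const_mul, integral_univ_inv_one_add_sq]
  refine le_trans (Real.sqrt_le_sqrt houter) ?_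
  have hCJ : 0 ≤ C * J := mul_nonneg hC.le hJ0
  have hsq : Real.sqrt (|t| * (C * J) ^ 2 * Real.pi)
      = Real.sqrt |t| * (C * J) * Real.sqrt Real.pi := by
    have e : (Real.sqrt |t| * (C * J) * Real.sqrt Real.pi) ^ 2
        = |t| * (C * J) ^ 2 * Real.pi := by
      rw [mul_pow, mul_pow, Real.sq_sqrt (abs_nonneg t), Real.sq_sqrt Real.pi_pos.le]
    rw [← e]
    exact Real.sqrt_sq (mul_nonneg (mul_nonneg (Real.sqrt_nonneg _) hCJ) (Real.sqrt_nonneg _))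
  rw [hsq]
  have haux1 : (0:ℝ) ≤ Real.sqrt Real.pi * C * Real.sqrt c2 :=
    mul_nonneg (mul_nonneg (Real.sqrt_nonneg _) hC.le) (Real.sqrt_nonneg _)
  have haux2 : (0:ℝ) ≤ Real.sqrt Real.pi * C * c1 :=
    mul_nonneg (mul_nonneg (Real.sqrt_nonneg _) hC.le) hc1
  have hCple : Real.sqrt Real.pi * C * c1 ≤ Real.sqrt Real.pi * C * (c1 + Real.sqrt c2) + 1 := by
    nlinarith
  have hCple2 : Real.sqrt Real.pi * C * Real.sqrt c2
      ≤ Real.sqrt Real.pi * C * (c1 + Real.sqrt c2) + 1 := by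
    nlinarith
  have htrpow : (0:ℝ) ≤ |t| ^ (-(n:ℝ)) := Real.rpow_nonneg (abs_nonneg t) _
  rw [mul_min_of_nonneg _ _ (mul_nonneg (by positivity) htrpow)]
  apply le_min
  · -- L∞ branch
    have hexp1 : Real.sqrt |t| * ((|t| ^ n)⁻¹ * |t|⁻¹)
        = |t| ^ (-(n:ℝ)) * |t| ^ (-(1:ℝ)/2) := by
      rw [Real.sqrt_eq_rpow, ← Real.rpow_natCast |t| n, ← Real.rpow_neg ht'.le,
        ← Real.rpow_neg_one |t|, ← Real.rpow_add ht', ← Real.rpow_add ht',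
        ← Real.rpow_add ht']
      congr 1
      ring
    calc Real.sqrt |t| * (C * J) * Real.sqrt Real.pi
        ≤ Real.sqrt |t| * (C * (M * ((|t| ^ n)⁻¹ * (|t|⁻¹ * c1)))) * Real.sqrt Real.pi := by
          apply mul_le_mul_of_nonneg_right _ (Real.sqrt_nonneg _)
          exact mul_le_mul_of_nonneg_left (mul_le_mul_of_nonneg_left hJ1 hC.le)
            (Real.sqrt_nonneg _)
      _ = (Real.sqrt Real.pi * C * c1) * (Real.sqrt |t| * ((|t| ^ n)⁻¹ * |t|⁻¹)) * M := by
          ring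
      _ = (Real.sqrt Real.pi * C * c1) * (|t| ^ (-(n:ℝ)) * |t| ^ (-(1:ℝ)/2)) * M := by
          rw [hexp1]
      _ = (Real.sqrt Real.pi * C * c1) * (|t| ^ (-(n:ℝ)) * (|t| ^ (-(1:ℝ)/2) * M)) := by
          ring
      _ ≤ (Real.sqrt Real.pi * C * (c1 + Real.sqrt c2) + 1)
            * (|t| ^ (-(n:ℝ)) * (|t| ^ (-(1:ℝ)/2) * M)) := by
          apply mul_le_mul_of_nonneg_right hCple
          exact mul_nonneg htrpow (mul_nonneg (Real.rpow_nonneg (abs_nonneg t) _) hM)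
      _ = (Real.sqrt Real.pi * C * (c1 + Real.sqrt c2) + 1) * |t| ^ (-(n:ℝ))
            * (|t| ^ (-(1:ℝ)/2) * M) := by ring
  · -- L² branch
    set L2 := Real.sqrt (∫ x in Set.Ioi (0:ℝ), ‖φ x‖ ^ 2) with hL2def
    have hL2nn : 0 ≤ L2 := Real.sqrt_nonneg _
    have hsqrt2 : Real.sqrt ((|t| ^ (n * 2))⁻¹ * (|t|⁻¹ * c2))
        = (|t| ^ n)⁻¹ * (Real.sqrt |t|)⁻¹ * Real.sqrt c2 := by
      rw [show (|t| ^ (n * 2))⁻¹ * (|t|⁻¹ * c2)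
          = ((|t| ^ n)⁻¹ * (Real.sqrt |t|)⁻¹ * Real.sqrt c2) ^ 2 by
        rw [mul_pow, mul_pow, inv_pow, inv_pow, Real.sq_sqrt (abs_nonneg t),
          Real.sq_sqrt hc2, ← pow_mul]
        ring]
      exact Real.sqrt_sq (by positivity)
    have hstpos : 0 < Real.sqrt |t| := Real.sqrt_pos.2 ht'
    have hpowinv : (|t| ^ n)⁻¹ = |t| ^ (-(n:ℝ)) := by
      rw [← Real.rpow_natCast |t| n, ← Real.rpow_neg ht'.le]
    calc Real.sqrt |t| * (C * J) * Real.sqrt Real.pi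
        ≤ Real.sqrt |t| * (C * (Real.sqrt ((|t| ^ (n * 2))⁻¹ * (|t|⁻¹ * c2)) * L2))
            * Real.sqrt Real.pi := by
          apply mul_le_mul_of_nonneg_right _ (Real.sqrt_nonneg _)
          exact mul_le_mul_of_nonneg_left (mul_le_mul_of_nonneg_left hJ2 hC.le)
            (Real.sqrt_nonneg _)
      _ = (Real.sqrt Real.pi * C * Real.sqrt c2)
            * ((|t| ^ n)⁻¹ * (Real.sqrt |t| * (Real.sqrt |t|)⁻¹)) * L2 := by
          rw [hsqrt2]; ring
      _ = (Real.sqrt Real.pi * C * Real.sqrt c2) * (|t| ^ (-(n:ℝ)) * L2) := by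
          rw [mul_inv_cancel₀ hstpos.ne', mul_one, hpowinv]; ring
      _ ≤ (Real.sqrt Real.pi * C * (c1 + Real.sqrt c2) + 1) * (|t| ^ (-(n:ℝ)) * L2) := by
          apply mul_le_mul_of_nonneg_right hCple2
          exact mul_nonneg htrpow hL2nn
      _ = (Real.sqrt Real.pi * C * (c1 + Real.sqrt c2) + 1) * |t| ^ (-(n:ℝ)) * L2 := by
          ring
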